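/- Let X ~ Γ_λ(α,β) with λ ∈ (0,1), α > 0, β > 0 and α + 2 < 1/λ. Then the variance Var(X) = E[X²] - (E[X])² = (α/β²) · (1-λ) / ((1-λ(α+1))² (1-λ(α+2))). -/

import Mathlib

open MeasureTheory Set Filter Real
open scoped ENNReal

/-- The degenerate gamma function `Γ_λ(s) = ∫_0^∞ (1+λt)^{-1/λ} t^{s-1} dt`. -/
noncomputable def degGamma (lam s : ℝ) : ℝ :=
  ∫ t in Set.Ioi (0:ℝ), (1 + lam * t) ^ (-1/lam) * t ^ (s - 1)

/-- The probability density function of the degenerate gamma distribution `Γ_λ(α,β)`. -/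
noncomputable def degGammaPdf (lam α β x : ℝ) : ℝ :=
  if 0 < x then (1 / degGamma lam α) * β * (1 + lam * β * x) ^ (-1/lam) * (β * x) ^ (α - 1)
  else 0

lemma contOn {lam s : ℝ} (hlam : 0 < lam) :
    ContinuousOn (fun t : ℝ => (1 + lam * t) ^ (-1/lam) * t ^ (s - 1)) (Set.Ioi 0) := by
  apply ContinuousOn.mul
  · exact (((continuous_const.add (continuous_const.mul continuous_id)).continuousOn).rpow_const
      (fun x hx => Or.inl (by simp only [Pi.add_apply, Pi.mul_apply, id]; nlinarith [mem_Ioi.1 hx])))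
  · exact continuousOn_id.rpow_const (fun x hx => Or.inl (ne_of_gt (mem_Ioi.1 hx)))

lemma intOn {lam s : ℝ} (hlam : 0 < lam) (hs : 0 < s) (h : s < 1/lam) :
    IntegrableOn (fun t : ℝ => (1 + lam * t) ^ (-1/lam) * t ^ (s - 1)) (Set.Ioi 0) := by
  have hmeas : AEStronglyMeasurable (fun t : ℝ => (1 + lam * t) ^ (-1/lam) * t ^ (s - 1))
      (volume.restrict (Set.Ioi (0:ℝ))) :=
    (contOn hlam).aestronglyMeasurable measurableSet_Ioi
  have hsplit : Set.Ioc (0:ℝ) 1 ∪ Set.Ioi 1 = Set.Ioi 0 := Set.Ioc_union_Ioi_eq_Ioi zero_le_one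
  rw [← hsplit]
  apply IntegrableOn.union
  · -- on Ioc 0 1, bound by t^(s-1)
    have hbd : IntegrableOn (fun t : ℝ => t ^ (s - 1)) (Set.Ioc (0:ℝ) 1) := by
      have := intervalIntegral.intervalIntegrable_rpow' (a := 0) (b := 1) (r := s - 1)
        (by linarith)
      rwa [intervalIntegrable_iff_integrableOn_Ioc_of_le zero_le_one] at this
    refine Integrable.mono hbd (hmeas.mono_set (by rw [← hsplit]; exact Set.subset_union_left)) ?_
    filter_upwards [ae_restrict_mem measurableSet_Ioc] with t ht
    have ht0 : 0 < t := ht.1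
    have h1 : (1 + lam * t) ^ (-1/lam) ≤ 1 :=
      Real.rpow_le_one_of_one_le_of_nonpos (by nlinarith) (by
        rw [neg_div]; exact neg_nonpos.2 (by positivity))
    have h2 : (0:ℝ) ≤ (1 + lam * t) ^ (-1/lam) := Real.rpow_nonneg (by nlinarith) _
    rw [Real.norm_eq_abs, Real.norm_eq_abs,
      abs_of_nonneg (mul_nonneg h2 (Real.rpow_nonneg ht0.le _)),
      abs_of_nonneg (by positivity : (0:ℝ) ≤ t ^ (s-1))]
    nlinarith [Real.rpow_nonneg ht0.le (s-1)]
  · -- on Ioi 1, bound by lam^(-1/lam) * t^(s-1-1/lam)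
    have hbd : IntegrableOn (fun t : ℝ => lam ^ (-1/lam) * t ^ (s - 1 - 1/lam)) (Set.Ioi (1:ℝ)) :=
      (integrableOn_Ioi_rpow_of_lt (by linarith) one_pos).const_mul _
    refine Integrable.mono hbd (hmeas.mono_set (by rw [← hsplit]; exact Set.subset_union_right)) ?_
    filter_upwards [ae_restrict_mem measurableSet_Ioi] with t ht
    have ht1 : (1:ℝ) < t := ht
    have ht0 : (0:ℝ) < t := lt_trans one_pos ht1
    have h1 : (1 + lam * t) ^ (-1/lam) ≤ (lam * t) ^ (-1/lam) :=
      Real.rpow_le_rpow_of_nonpos (by positivity) (by linarith)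
        (by rw [neg_div]; exact neg_nonpos.2 (by positivity))
    have h2 : (lam * t) ^ (-1/lam) = lam ^ (-1/lam) * t ^ (-1/lam) :=
      Real.mul_rpow hlam.le ht0.le
    have h3 : t ^ (s - 1 - 1/lam) = t ^ (-1/lam) * t ^ (s-1) := by
      rw [← Real.rpow_add ht0]; ring_nf
    have h4 : (0:ℝ) ≤ (1 + lam * t) ^ (-1/lam) := Real.rpow_nonneg (by nlinarith) _
    rw [Real.norm_eq_abs, Real.norm_eq_abs,
      abs_of_nonneg (mul_nonneg h4 (Real.rpow_nonneg ht0.le _)),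
      abs_of_nonneg (by positivity : (0:ℝ) ≤ lam ^ (-1/lam) * t ^ (s - 1 - 1/lam))]
    calc (1 + lam * t) ^ (-1/lam) * t ^ (s-1) ≤ (lam * t) ^ (-1/lam) * t ^ (s-1) := by
          exact mul_le_mul_of_nonneg_right h1 (Real.rpow_nonneg ht0.le _)
      _ = lam ^ (-1/lam) * t ^ (s - 1 - 1/lam) := by rw [h2, h3]; ring

lemma tendTop {lam s : ℝ} (hlam : 0 < lam) (hs : 0 < s) (h : s + 1 < 1/lam) :
    Tendsto (fun t : ℝ => t ^ s * (1 + lam * t) ^ (1 - 1/lam)) atTop (nhds 0) := by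
  have hexp : s + (1 - 1/lam) < 0 := by linarith
  have hlim : Tendsto (fun t : ℝ => lam ^ (1 - 1/lam) * t ^ (s + (1 - 1/lam))) atTop (nhds 0) := by
    have := (tendsto_rpow_neg_atTop (y := -(s + (1 - 1/lam))) (by linarith)).const_mul
      (lam ^ (1 - 1/lam))
    simpa using this
  refine squeeze_zero' ?_ ?_ hlim
  · filter_upwards [eventually_gt_atTop 0] with t ht
    have : (0:ℝ) ≤ (1 + lam * t) ^ (1 - 1/lam) := Real.rpow_nonneg (by nlinarith) _
    positivity
  · filter_upwards [eventually_gt_atTop 0] with t ht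
    have h1 : (1 + lam * t) ^ (1 - 1/lam) ≤ (lam * t) ^ (1 - 1/lam) := by
      apply Real.rpow_le_rpow_of_nonpos (by positivity) (by linarith)
      have : (1:ℝ) < 1/lam := by nlinarith
      linarith
    have h2 : (lam * t) ^ (1 - 1/lam) = lam ^ (1 - 1/lam) * t ^ (1 - 1/lam) :=
      Real.mul_rpow hlam.le ht.le
    calc t ^ s * (1 + lam * t) ^ (1 - 1/lam) ≤ t ^ s * (lam * t) ^ (1 - 1/lam) :=
          mul_le_mul_of_nonneg_left h1 (Real.rpow_nonneg ht.le _)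
      _ = lam ^ (1 - 1/lam) * t ^ (s + (1 - 1/lam)) := by
          rw [h2, Real.rpow_add ht]; ring

lemma degGamma_succ {lam s : ℝ} (hlam : 0 < lam) (hs : 0 < s) (h : s + 1 < 1/lam) :
    degGamma lam (s + 1) = s / (1 - lam * (s + 1)) * degGamma lam s := by
  set g : ℝ → ℝ → ℝ := fun u t => (1 + lam * t) ^ (-1/lam) * t ^ (u - 1) with hg
  have hint_s : IntegrableOn (g s) (Set.Ioi 0) := intOn hlam hs (by linarith)
  have hint_s1 : IntegrableOn (g (s+1)) (Set.Ioi 0) := intOn hlam (by linarith) (by linarith)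
  set F : ℝ → ℝ := fun t => t ^ s * (1 + lam * t) ^ (1 - 1/lam) with hF
  set φ : ℝ → ℝ := fun t => s * g s t + (lam * (s+1) - 1) * g (s+1) t with hφ
  have hderiv : ∀ t ∈ Set.Ioi (0:ℝ), HasDerivAt F (φ t) t := by
    intro t ht
    have ht0 : (0:ℝ) < t := ht
    have hb : (0:ℝ) < 1 + lam * t := by nlinarith
    have d1 : HasDerivAt (fun t : ℝ => t ^ s) (s * t ^ (s - 1)) t :=
      Real.hasDerivAt_rpow_const (Or.inl ht0.ne')
    have d2 : HasDerivAt (fun t : ℝ => (1 + lam * t) ^ (1 - 1/lam))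
        (lam * (1 - 1/lam) * (1 + lam * t) ^ ((1 - 1/lam) - 1)) t := by
      have hb' : HasDerivAt (fun t : ℝ => 1 + lam * t) lam t := by
        simpa using ((hasDerivAt_id t).const_mul lam).const_add 1
      have := hb'.rpow_const (p := 1 - 1/lam) (Or.inl hb.ne')
      convert this using 1; all_goals ring
    have := d1.mul d2
    refine this.congr_deriv ?_
    symm
    have e1 : (1 - 1/lam) - 1 = -1/lam := by ring
    have e2 : (1 + lam * t) ^ (1 - 1/lam) = (1 + lam * t) ^ (-1/lam) * (1 + lam * t) := by
      rw [← Real.rpow_add_one hb.ne' (-1/lam)]; ring_nf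
    have e3 : t ^ s = t ^ (s - 1) * t := by
      rw [← Real.rpow_add_one ht0.ne' (s-1)]; ring_nf
    have e4 : t ^ ((s+1) - 1) = t ^ (s - 1) * t := by
      rw [← Real.rpow_add_one ht0.ne' (s-1)]; ring_nf
    simp only [hφ, hg, e1, e4]
    rw [e2, e3]
    field_simp
    ring
  have hcont : ContinuousWithinAt F (Set.Ici 0) 0 := by
    apply ContinuousWithinAt.mul
    · exact (Real.continuousAt_rpow_const 0 s (Or.inr hs.le)).continuousWithinAt
    · have : ContinuousAt (fun t : ℝ => (1 + lam * t) ^ (1 - 1/lam)) 0 := by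
        apply ContinuousAt.rpow_const
        · exact (continuous_const.add (continuous_const.mul continuous_id)).continuousAt
        · left; simp
      exact this.continuousWithinAt
  have hφint : IntegrableOn φ (Set.Ioi 0) := by
    exact (hint_s.const_mul s).add (hint_s1.const_mul _)
  have key : ∫ t in Set.Ioi (0:ℝ), φ t = 0 - F 0 :=
    integral_Ioi_of_hasDerivAt_of_tendsto hcont hderiv hφint (tendTop hlam hs h)
  have hF0 : F 0 = 0 := by
    simp only [hF]
    rw [Real.zero_rpow hs.ne']
    ring
  rw [hF0, sub_zero] at key
  have hsplit : ∫ t in Set.Ioi (0:ℝ), φ t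
      = s * degGamma lam s + (lam * (s+1) - 1) * degGamma lam (s+1) := by
    rw [hφ]
    rw [integral_add (hint_s.const_mul s) (hint_s1.const_mul _), integral_const_mul,
      integral_const_mul]
    rfl
  rw [hsplit] at key
  have hden : 1 - lam * (s + 1) > 0 := by
    have : lam * (s + 1) < lam * (1/lam) := by
      apply mul_lt_mul_of_pos_left h hlam
    rw [mul_one_div, div_self hlam.ne'] at this
    linarith
  field_simp
  rw [eq_div_iff (by linarith)]
  linarith [key]

lemma degGamma_pos {lam s : ℝ} (hlam : 0 < lam) (hs : 0 < s) (h : s < 1/lam) :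
    0 < degGamma lam s := by
  rw [degGamma]
  rw [setIntegral_pos_iff_support_of_nonneg_ae]
  · have hsub : Set.Ioi (0:ℝ) ⊆ Function.support
        (fun t : ℝ => (1 + lam * t) ^ (-1/lam) * t ^ (s - 1)) := by
      intro t ht
      have ht0 : (0:ℝ) < t := ht
      have : (0:ℝ) < (1 + lam * t) ^ (-1/lam) * t ^ (s - 1) := by
        apply mul_pos (Real.rpow_pos_of_pos (by nlinarith) _) (Real.rpow_pos_of_pos ht0 _)
      exact this.ne'
    calc (0:ℝ≥0∞) < volume (Set.Ioi (0:ℝ)) := by simp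
      _ ≤ volume (Function.support (fun t : ℝ => (1 + lam * t) ^ (-1/lam) * t ^ (s - 1))
          ∩ Set.Ioi 0) := le_of_eq (by rw [Set.inter_eq_right.mpr hsub])
  · filter_upwards [ae_restrict_mem measurableSet_Ioi] with t ht
    have ht0 : (0:ℝ) < t := ht
    positivity
  · exact intOn hlam hs h

lemma moment {lam α β : ℝ} (hlam : 0 < lam) (hα : 0 < α) (hβ : 0 < β) (r : ℝ) :
    ∫ x : ℝ, x ^ r * degGammaPdf lam α β x
      = β ^ (-r) * (degGamma lam (α + r) / degGamma lam α) := by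
  have h0 : ∀ x ∉ Set.Ioi (0:ℝ), x ^ r * degGammaPdf lam α β x = 0 := by
    intro x hx
    rw [degGammaPdf, if_neg (by simpa using hx), mul_zero]
  rw [← setIntegral_eq_integral_of_forall_compl_eq_zero h0]
  set g : ℝ → ℝ := fun t => (1 + lam * t) ^ (-1/lam) * t ^ (α + r - 1) with hgdef
  have hcong : ∀ x ∈ Set.Ioi (0:ℝ), x ^ r * degGammaPdf lam α β x
      = ((1 / degGamma lam α) * β ^ (-r)) * (β * g (β * x)) := by
    intro x hx
    have hx0 : (0:ℝ) < x := hx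
    rw [degGammaPdf, if_pos hx0, hgdef]
    have e1 : (β * x) ^ (α + r - 1) = (β * x) ^ (α - 1) * (β ^ r * x ^ r) := by
      rw [show α + r - 1 = (α - 1) + r by ring, Real.rpow_add (by positivity)]
      congr 1
      exact Real.mul_rpow hβ.le hx0.le
    have e2 : β ^ (-r) * β ^ r = 1 := by
      rw [← Real.rpow_add hβ]; simp
    beta_reduce
    rw [show lam * (β * x) = lam * β * x by ring, e1, Real.rpow_neg hβ.le]
    have hβr : (0:ℝ) < β ^ r := Real.rpow_pos_of_pos hβ r
    have hc : (β ^ r)⁻¹ * β ^ r = 1 := inv_mul_cancel₀ hβr.ne'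
    linear_combination -(1 / degGamma lam α) * β * ((1 + lam * β * x) ^ (-1/lam)) *
      ((β * x) ^ (α - 1)) * (x ^ r) * hc
  rw [setIntegral_congr_fun measurableSet_Ioi hcong, integral_const_mul, integral_const_mul,
    integral_comp_mul_left_Ioi g 0 hβ]
  rw [mul_zero]
  have : degGamma lam (α + r) = ∫ t in Set.Ioi (0:ℝ), g t := by rw [degGamma]
  rw [smul_eq_mul, ← this]
  field_simp

theorem degGamma_variance (lam α β : ℝ) (hlam : lam ∈ Set.Ioo (0:ℝ) 1)
    (hα : 0 < α) (hβ : 0 < β) (h : α + 2 < 1 / lam) :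
    (∫ x : ℝ, x ^ 2 * degGammaPdf lam α β x) - (∫ x : ℝ, x * degGammaPdf lam α β x) ^ 2 =
      (α / β ^ 2) * ((1 - lam) / ((1 - lam * (α + 1)) ^ 2 * (1 - lam * (α + 2)))) := by
  obtain ⟨hl0, hl1⟩ := hlam
  have h1 : α + 1 < 1/lam := by linarith
  have hΓ : 0 < degGamma lam α := degGamma_pos hl0 hα (by linarith)
  have m1 := moment hl0 hα hβ 1
  simp only [Real.rpow_one] at m1
  have m2 := moment hl0 hα hβ 2
  have hx2 : ∀ x : ℝ, x ^ (2:ℝ) = x ^ 2 := by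
    intro x
    rw [show (2:ℝ) = ((2:ℕ):ℝ) by norm_num, Real.rpow_natCast]
  simp only [hx2] at m2
  have r1 : degGamma lam (α + 1) = α / (1 - lam * (α + 1)) * degGamma lam α :=
    degGamma_succ hl0 hα h1
  have r2 : degGamma lam (α + 2) = (α + 1) / (1 - lam * (α + 2)) * degGamma lam (α + 1) := by
    have := degGamma_succ hl0 (show (0:ℝ) < α + 1 by linarith) (show α + 1 + 1 < 1/lam by linarith)
    rw [show α + 1 + 1 = α + 2 by ring] at this
    exact this
  have b1 : β ^ (-(1:ℝ)) = β⁻¹ := Real.rpow_neg_one β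
  have b2 : β ^ (-(2:ℝ)) = (β ^ 2)⁻¹ := by
    rw [Real.rpow_neg hβ.le, show (2:ℝ) = ((2:ℕ):ℝ) by norm_num, Real.rpow_natCast]
  have hd1 : 0 < 1 - lam * (α + 1) := by
    have : lam * (α + 1) < lam * (1/lam) := mul_lt_mul_of_pos_left h1 hl0
    rw [mul_one_div, div_self hl0.ne'] at this
    linarith
  have hd2 : 0 < 1 - lam * (α + 2) := by
    have : lam * (α + 2) < lam * (1/lam) := mul_lt_mul_of_pos_left h hl0
    rw [mul_one_div, div_self hl0.ne'] at this
    linarith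
  rw [m1, m2, r1, r2, r1, b1, b2]
  field_simp
  ring
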